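/- Let g ≥ 1 and f(x) = x^{2g+1} + Σ_{k=0}^{2g−1} λ_{2(2g+1−k)} x^k. For 1 ≤ i ≤ g define R_i(x) = x^{g−i+1} ∂_x q(f(x), x^{2g−2i+2}), where q(a,b) denotes the quotient of Euclidean division of a by b. Then R_1(x) = x^g, and for every i the polynomial R_i has degree at most g+i−1 in x. -/

import Mathlib

open Polynomial

noncomputable section

/-- `lamP g j` represents `λ_{2j}` in `ℚ[λ_4, …, λ_{4g+2}]`, with conventions
`λ_0 = 1`, `λ_2 = 0`, `λ_s = 0` outside `{0, 4, …, 4g+2}`. -/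
def lamP (g j : ℕ) : MvPolynomial ℕ ℚ :=
  if j = 0 then 1 else if 2 ≤ j ∧ j ≤ 2*g+1 then MvPolynomial.X j else 0

/-- `f(x) = x^{2g+1} + Σ_{k=0}^{2g−1} λ_{2(2g+1−k)} x^k`. -/
def fHyp (g : ℕ) : Polynomial (MvPolynomial ℕ ℚ) :=
  X ^ (2*g+1) + ∑ k ∈ Finset.range (2*g), C (lamP g (2*g+1-k)) * X ^ k

/-- `R_i(x) = x^{g−i+1} ∂_x q(f(x), x^{2g−2i+2})`, where `q` is the quotient of
Euclidean division by the monic polynomial `x^{2g−2i+2}`. -/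
def Rpol (g i : ℕ) : Polynomial (MvPolynomial ℕ ℚ) :=
  X ^ (g - i + 1) * derivative (fHyp g /ₘ X ^ (2*g - 2*i + 2))

lemma sum_deg (g : ℕ) (hg : 1 ≤ g) :
    (∑ k ∈ Finset.range (2*g), C (lamP g (2*g+1-k)) * X ^ k :
      Polynomial (MvPolynomial ℕ ℚ)).degree < ((2*g : ℕ) : WithBot ℕ) := by
  refine lt_of_le_of_lt (degree_sum_le _ _) ?_
  rw [Finset.sup_lt_iff (show (⊥ : WithBot ℕ) < ((2*g : ℕ) : WithBot ℕ) from
    bot_lt_iff_ne_bot.mpr (by exact_mod_cast WithBot.coe_ne_bot))]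
  intro k hk
  exact lt_of_le_of_lt (degree_C_mul_X_pow_le _ _)
    (by exact_mod_cast Finset.mem_range.mp hk)

lemma fHyp_degree (g : ℕ) (hg : 1 ≤ g) : (fHyp g).degree = (2*g+1 : ℕ) := by
  rw [fHyp, degree_add_eq_left_of_degree_lt, degree_X_pow]
  rw [degree_X_pow]
  refine lt_of_lt_of_le (sum_deg g hg) ?_
  exact_mod_cast Nat.le_succ _

/-- `R_1(x) = x^g`, and for every `1 ≤ i ≤ g` the polynomial `R_i` has degree at
most `g + i − 1` in `x`. -/
theorem Rpol_one_and_degree (g : ℕ) (hg : 1 ≤ g) :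
    Rpol g 1 = X ^ g ∧ ∀ i : ℕ, 1 ≤ i → i ≤ g → (Rpol g i).degree ≤ ((g + i - 1 : ℕ) : WithBot ℕ) := by
  constructor
  · have hmon : (X ^ (2*g) : Polynomial (MvPolynomial ℕ ℚ)).Monic := monic_X_pow _
    have hdiv : fHyp g /ₘ X ^ (2*g) = X := by
      have := div_modByMonic_unique (f := fHyp g)
        (g := (X ^ (2*g) : Polynomial (MvPolynomial ℕ ℚ)))
        X (∑ k ∈ Finset.range (2*g), C (lamP g (2*g+1-k)) * X ^ k) hmon
        ⟨by rw [fHyp, pow_succ]; ring, by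
          rw [degree_X_pow]; exact sum_deg g hg⟩
      exact this.1
    rw [Rpol]
    have h1 : 2*g - 2*1 + 2 = 2*g := by omega
    have h2 : g - 1 + 1 = g := by omega
    rw [h1, h2, hdiv, derivative_X, mul_one]
  · intro i hi hig
    have hmon : (X ^ (2*g - 2*i + 2) : Polynomial (MvPolynomial ℕ ℚ)).Monic :=
      monic_X_pow _
    have hnd : (fHyp g).natDegree = 2*g+1 :=
      natDegree_eq_of_degree_eq_some (fHyp_degree g hg)
    have hq : (fHyp g /ₘ X ^ (2*g - 2*i + 2)).natDegree = 2*i - 1 := by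
      rw [natDegree_divByMonic _ hmon, hnd, natDegree_X_pow]
      omega
    have hd : (derivative (fHyp g /ₘ X ^ (2*g - 2*i + 2))).natDegree ≤ 2*i - 2 := by
      have := natDegree_derivative_le (fHyp g /ₘ X ^ (2*g - 2*i + 2))
      omega
    calc (Rpol g i).degree
        ≤ (X ^ (g - i + 1) : Polynomial (MvPolynomial ℕ ℚ)).degree +
            (derivative (fHyp g /ₘ X ^ (2*g - 2*i + 2))).degree := degree_mul_le _ _
      _ ≤ ((g - i + 1 : ℕ) : WithBot ℕ) + ((2*i - 2 : ℕ) : WithBot ℕ) := by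
          refine add_le_add (le_of_eq (degree_X_pow _)) ?_
          exact le_trans (degree_le_natDegree) (by exact_mod_cast hd)
      _ = ((g + i - 1 : ℕ) : WithBot ℕ) := by
          rw [← Nat.cast_add]; congr 1; omega

end
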